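/- For every k ≥ 1, the intersection of the kernels of W_n* over all n ≥ k+1 equals span{1−z, 1−z², ..., 1−z^k}. -/

import Mathlib

open scoped InnerProductSpace
open Filter ContinuousLinearMap

noncomputable section

/-- The Hardy space `H²` identified with `ℓ²(ℕ)` via Maclaurin coefficients. -/
abbrev H2 := lp (fun _ : ℕ => ℂ) 2

/-- `W` is the weighted composition operator `W_n f(z) = (1+z+⋯+z^{n-1}) f(z^n)`,
expressed in Maclaurin coefficients: `(W_n f)^(nk+j) = f^(k)` for `0 ≤ j ≤ n-1`. -/
def IsWn (n : ℕ) (W : H2 →L[ℂ] H2) : Prop :=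
  ∀ (f : H2) (k j : ℕ), j < n → (W f) (n * k + j) = f k

lemma single_coord (j i : ℕ) : (lp.single 2 j (1:ℂ) : H2) i = if i = j then 1 else 0 := by
  rw [lp.single_apply]
  split_ifs with h
  · subst h; simp
  · exact Pi.single_eq_of_ne h _

lemma Wn_single_apply {n : ℕ} (hn : 1 ≤ n) {W : H2 →L[ℂ] H2} (hWn : IsWn n W)
    (m i : ℕ) : (W (lp.single 2 m (1:ℂ))) i = if i / n = m then 1 else 0 := by
  have h := hWn (lp.single 2 m (1:ℂ)) (i / n) (i % n) (Nat.mod_lt _ hn)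
  rw [Nat.div_add_mod] at h
  rw [h, single_coord]

lemma adjoint_apply_coord {n : ℕ} (hn : 1 ≤ n) {W : H2 →L[ℂ] H2} (hWn : IsWn n W)
    (f : H2) (m : ℕ) :
    (ContinuousLinearMap.adjoint W f) m = ∑ j ∈ Finset.range n, f (n * m + j) := by
  have h1 : (ContinuousLinearMap.adjoint W f) m
      = ⟪lp.single 2 m (1:ℂ), ContinuousLinearMap.adjoint W f⟫_ℂ := by
    rw [lp.inner_single_left]
    simp
  rw [h1, ContinuousLinearMap.adjoint_inner_right, lp.inner_eq_tsum]
  have hterm : ∀ i, ⟪(W (lp.single 2 m (1:ℂ))) i, f i⟫_ℂ = if i / n = m then f i else 0 := by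
    intro i
    rw [Wn_single_apply hn hWn m i, RCLike.inner_apply]
    split_ifs with hc <;> simp
  calc (∑' i, ⟪(W (lp.single 2 m (1:ℂ))) i, f i⟫_ℂ)
      = ∑' i, if i / n = m then f i else 0 := tsum_congr hterm
    _ = ∑ i ∈ Finset.image (fun j => n*m+j) (Finset.range n),
          (if i / n = m then f i else 0) := by
        apply tsum_eq_sum
        intro i hi
        rw [if_neg]
        intro hc
        apply hi
        refine Finset.mem_image.2 ⟨i % n, Finset.mem_range.2 (Nat.mod_lt _ hn), ?_⟩
        rw [← hc, Nat.div_add_mod]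
    _ = ∑ j ∈ Finset.range n, f (n*m+j) := by
        rw [Finset.sum_image (by intro a _ b _ h; simp only at h; omega)]
        refine Finset.sum_congr rfl fun j hj => ?_
        rw [if_pos]
        rw [Nat.mul_add_div hn]
        simp [Nat.div_eq_of_lt (Finset.mem_range.1 hj)]

lemma mem_ker_iff {n : ℕ} (hn : 1 ≤ n) {W : H2 →L[ℂ] H2} (hWn : IsWn n W) (f : H2) :
    f ∈ LinearMap.ker (ContinuousLinearMap.adjoint W : H2 →ₗ[ℂ] H2) ↔
      ∀ m, ∑ j ∈ Finset.range n, f (n * m + j) = 0 := by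
  rw [LinearMap.mem_ker, ContinuousLinearMap.coe_coe]
  constructor
  · intro h m
    rw [← adjoint_apply_coord hn hWn f m, h]
    rfl
  · intro h
    apply lp.ext
    funext m
    rw [adjoint_apply_coord hn hWn f m, h m]
    rfl

/-- For every `k ≥ 1`, `⋂_{n ≥ k+1} ker W_n* = span{1-z, …, 1-z^k}`, where `1 - z^j`
corresponds to the sequence `e_0 - e_j` in `ℓ²`. -/
theorem iInf_ker_adjoint (k : ℕ) (hk : 1 ≤ k) (W : ℕ → (H2 →L[ℂ] H2))
    (hW : ∀ n, 1 ≤ n → IsWn n (W n)) :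
    (⨅ n : ℕ, ⨅ _ : k + 1 ≤ n, LinearMap.ker (ContinuousLinearMap.adjoint (W n) : H2 →ₗ[ℂ] H2)) =
      Submodule.span ℂ
        ((fun j => lp.single (E := fun _ : ℕ => ℂ) 2 0 (1 : ℂ) - lp.single (E := fun _ : ℕ => ℂ) 2 j (1 : ℂ)) '' (Set.Icc 1 k)) := by
  have hcoord : ∀ (j i : ℕ),
      ((lp.single 2 0 (1:ℂ) - lp.single 2 j (1:ℂ) : H2) : ∀ _ : ℕ, ℂ) i
        = (if i = 0 then 1 else 0) - (if i = j then 1 else 0) := by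
    intro j i
    rw [lp.coeFn_sub, Pi.sub_apply, single_coord, single_coord]
  apply le_antisymm
  · -- ⊆ : an element of all kernels lies in the span
    intro f hf
    have hblock : ∀ n, k + 1 ≤ n → ∀ m, ∑ j ∈ Finset.range n, f (n * m + j) = 0 := by
      intro n hn m
      have h1n : 1 ≤ n := le_trans (Nat.le_add_left 1 k) hn
      have := (Submodule.mem_iInf _).1 ((Submodule.mem_iInf _).1 hf n) hn
      exact (mem_ker_iff h1n (hW n h1n) f).1 this m
    have hS : ∀ n, k + 1 ≤ n → ∑ i ∈ Finset.range n, f i = 0 := by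
      intro n hn
      have := hblock n hn 0
      simpa using this
    have hzero : ∀ i, k + 1 ≤ i → f i = 0 := by
      intro i hi
      have h1 := hS i hi
      have h2 := hS (i + 1) (le_trans hi (Nat.le_succ i))
      rw [Finset.sum_range_succ, h1, zero_add] at h2
      exact h2
    have hsplit : Finset.range (k + 1) = insert 0 (Finset.Icc 1 k) := by
      ext x; simp [Finset.mem_range, Finset.mem_Icc]; omega
    have h0 : f 0 = -∑ j ∈ Finset.Icc 1 k, f j := by
      have := hS (k + 1) le_rfl
      rw [hsplit, Finset.sum_insert (by simp)] at this
      linear_combination this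
    have heq : f = ∑ j ∈ Finset.Icc 1 k,
        (-f j) • (lp.single 2 0 (1:ℂ) - lp.single 2 j (1:ℂ)) := by
      apply lp.ext
      funext i
      have hrhs : ((∑ j ∈ Finset.Icc 1 k,
          (-f j) • (lp.single 2 0 (1:ℂ) - lp.single 2 j (1:ℂ)) : H2) : ∀ _ : ℕ, ℂ) i
          = ∑ j ∈ Finset.Icc 1 k,
            (-f j) * ((if i = 0 then 1 else 0) - (if i = j then 1 else 0)) := by
        rw [lp.coeFn_sum, Finset.sum_apply]
        refine Finset.sum_congr rfl fun j _ => ?_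
        rw [lp.coeFn_smul, Pi.smul_apply, hcoord]
        rfl
      rw [hrhs]
      rcases eq_or_ne i 0 with hi0 | hi0
      · subst hi0
        rw [h0, ← Finset.sum_neg_distrib]
        refine Finset.sum_congr rfl fun j hj => ?_
        have : (0:ℕ) ≠ j := by
          have := (Finset.mem_Icc.1 hj).1; omega
        rw [if_pos rfl, if_neg this]
        ring
      · rcases le_or_gt i k with hik | hik
        · have hmem : i ∈ Finset.Icc 1 k := Finset.mem_Icc.2 ⟨Nat.one_le_iff_ne_zero.2 hi0, hik⟩
          have : ∀ j ∈ Finset.Icc 1 k,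
              (-f j) * ((if i = 0 then 1 else 0) - (if i = j then 1 else 0))
              = if i = j then f j else 0 := by
            intro j hj
            rw [if_neg hi0]
            split_ifs with h <;> ring
          rw [Finset.sum_congr rfl this, Finset.sum_ite_eq, if_pos hmem]
        · have : ∀ j ∈ Finset.Icc 1 k,
              (-f j) * ((if i = 0 then 1 else 0) - (if i = j then 1 else 0)) = 0 := by
            intro j hj
            have hij : i ≠ j := by
              have := (Finset.mem_Icc.1 hj).2; omega
            rw [if_neg hi0, if_neg hij]
            ring
          rw [Finset.sum_congr rfl this, Finset.sum_const_zero]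
          exact hzero i hik
    rw [heq]
    exact Submodule.sum_mem _ fun j hj =>
      Submodule.smul_mem _ _ (Submodule.subset_span ⟨j, Finset.mem_Icc.1 hj, rfl⟩)
  · -- ⊇ : each generator lies in every kernel
    rw [Submodule.span_le]
    rintro x ⟨j, hj, rfl⟩
    rw [Set.mem_Icc] at hj
    rw [SetLike.mem_coe]
    refine (Submodule.mem_iInf _).2 fun n => (Submodule.mem_iInf _).2 fun hn => ?_
    have h1n : 1 ≤ n := le_trans (Nat.le_add_left 1 k) hn
    rw [mem_ker_iff h1n (hW n h1n)]
    intro m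
    rcases Nat.eq_zero_or_pos m with hm | hm
    · subst hm
      have : ∀ i ∈ Finset.range n,
          ((lp.single 2 0 (1:ℂ) - lp.single 2 j (1:ℂ) : H2) : ∀ _ : ℕ, ℂ) (n * 0 + i)
          = (if i = 0 then 1 else 0) - (if i = j then 1 else 0) := by
        intro i _
        rw [Nat.mul_zero, Nat.zero_add, hcoord]
      rw [Finset.sum_congr rfl this, Finset.sum_sub_distrib,
        Finset.sum_ite_eq' (Finset.range n) 0 (fun _ => (1:ℂ)),
        Finset.sum_ite_eq' (Finset.range n) j (fun _ => (1:ℂ)),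
        if_pos (Finset.mem_range.2 (by omega)), if_pos (Finset.mem_range.2 (by omega))]
      ring
    · have : ∀ i ∈ Finset.range n,
          ((lp.single 2 0 (1:ℂ) - lp.single 2 j (1:ℂ) : H2) : ∀ _ : ℕ, ℂ) (n * m + i)
          = 0 := by
        intro i _
        rw [hcoord]
        have h1 : n * m + i ≠ 0 := by positivity
        have h2 : n * m + i ≠ j := by nlinarith [hj.2, hn, hm]
        rw [if_neg h1, if_neg h2]
        ring
      rw [Finset.sum_congr rfl this, Finset.sum_const_zero]
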